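/- Let H be a real Hilbert space with inner product given by a symmetric continuous coercive bilinear form a* satisfying α‖v‖² ≤ a*(v,v) ≤ M‖v‖² with 0 < α ≤ M. Let S be a closed subspace, z ∈ H, and P z ∈ S satisfying |a*(z − P z, φ)| ≤ ε ‖P z‖ ‖φ‖ for all φ ∈ S, with 0 ≤ ε < α/4. Then ‖z − P z‖ ≤ C (inf_{φ ∈ S} ‖z − φ‖ + ε ‖z‖) for a constant C depending only on α, M. -/

import Mathlib

/-- Céa-type lemma with perturbed Galerkin orthogonality. -/
theorem stmt_1 {H : Type*} [NormedAddCommGroup H] [InnerProductSpace ℝ H] [CompleteSpace H]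
    (α M : ℝ) (hα : 0 < α) (hαM : α ≤ M)
    (a : LinearMap.BilinForm ℝ H)
    (hsymm : ∀ v w : H, a v w = a w v)
    (hcont : ∀ v w : H, |a v w| ≤ M * ‖v‖ * ‖w‖)
    (hcoer : ∀ v : H, α * ‖v‖ ^ 2 ≤ a v v) :
    ∃ C > 0, ∀ (S : Submodule ℝ H), IsClosed (S : Set H) →
      ∀ (z Pz : H), Pz ∈ S →
      ∀ ε : ℝ, 0 ≤ ε → ε < α / 4 →
      (∀ φ ∈ S, |a (z - Pz) φ| ≤ ε * ‖Pz‖ * ‖φ‖) →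
      ‖z - Pz‖ ≤ C * (sInf ((fun φ : H => ‖z - φ‖) '' (S : Set H)) + ε * ‖z‖) := by
  have hM : 0 < M := lt_of_lt_of_le hα hαM
  obtain ⟨C, hC1, hCα⟩ : ∃ C : ℝ, 1 ≤ C ∧ 5 * M / 4 + 2 ≤ 3 * α / 4 * C := by
    refine ⟨(5 * M / 4 + 2) * (4 / (3 * α)) + 1, ?_, ?_⟩
    · have : 0 ≤ (5 * M / 4 + 2) * (4 / (3 * α)) := by positivity
      linarith
    · have heq : 3 * α / 4 * ((5 * M / 4 + 2) * (4 / (3 * α))) = 5 * M / 4 + 2 := by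
        field_simp
      nlinarith [heq]
  have hC0 : (0 : ℝ) < C := lt_of_lt_of_le one_pos hC1
  refine ⟨C, hC0, ?_⟩
  intro S hS z Pz hPz ε hε hεα hgal
  have main : ∀ φ ∈ S, ‖z - Pz‖ ≤ C * (‖z - φ‖ + ε * ‖z‖) := by
    intro φ hφ
    by_contra hcon
    push_neg at hcon
    have h1 : α * ‖z - Pz‖ ^ 2 ≤ a (z - Pz) (z - Pz) := hcoer _
    have hsplit : a (z - Pz) (z - Pz) = a (z - Pz) (z - φ) + a (z - Pz) (φ - Pz) := by
      have h : (z - φ) + (φ - Pz) = z - Pz := by abel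
      rw [← h, map_add]
    rw [hsplit] at h1
    have h2 : a (z - Pz) (z - φ) ≤ M * ‖z - Pz‖ * ‖z - φ‖ :=
      le_trans (le_abs_self _) (hcont _ _)
    have h3 : a (z - Pz) (φ - Pz) ≤ ε * ‖Pz‖ * ‖φ - Pz‖ :=
      le_trans (le_abs_self _) (hgal _ (S.sub_mem hφ hPz))
    have h4 : ‖Pz‖ ≤ ‖z‖ + ‖z - Pz‖ := by
      have h : Pz = z - (z - Pz) := by abel
      calc ‖Pz‖ = ‖z - (z - Pz)‖ := by rw [← h]
        _ ≤ ‖z‖ + ‖z - Pz‖ := norm_sub_le _ _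
    have h5 : ‖φ - Pz‖ ≤ ‖z - φ‖ + ‖z - Pz‖ := by
      have h : φ - Pz = (φ - z) + (z - Pz) := by abel
      calc ‖φ - Pz‖ = ‖(φ - z) + (z - Pz)‖ := by rw [← h]
        _ ≤ ‖φ - z‖ + ‖z - Pz‖ := norm_add_le _ _
        _ = ‖z - φ‖ + ‖z - Pz‖ := by rw [norm_sub_rev]
    -- abstract the norms into opaque reals
    obtain ⟨E, hE⟩ : ∃ E, E = ‖z - Pz‖ := ⟨_, rfl⟩
    obtain ⟨d, hd⟩ : ∃ d, d = ‖z - φ‖ := ⟨_, rfl⟩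
    obtain ⟨q, hq⟩ : ∃ q, q = ‖Pz‖ := ⟨_, rfl⟩
    obtain ⟨r, hr⟩ : ∃ r, r = ‖φ - Pz‖ := ⟨_, rfl⟩
    obtain ⟨nz, hnz⟩ : ∃ nz, nz = ‖z‖ := ⟨_, rfl⟩
    obtain ⟨A1, hA1⟩ : ∃ A1, A1 = a (z - Pz) (z - φ) := ⟨_, rfl⟩
    obtain ⟨A2, hA2⟩ : ∃ A2, A2 = a (z - Pz) (φ - Pz) := ⟨_, rfl⟩
    simp only [← hE, ← hd, ← hq, ← hr, ← hnz, ← hA1, ← hA2] at h1 h2 h3 h4 h5 hcon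
    have hd0 : 0 ≤ d := hd ▸ norm_nonneg _
    have hnz0 : 0 ≤ nz := hnz ▸ norm_nonneg _
    have hq0 : 0 ≤ q := hq ▸ norm_nonneg _
    have hr0 : 0 ≤ r := hr ▸ norm_nonneg _
    have hs0 : 0 ≤ ε * nz := mul_nonneg hε hnz0
    have hE0 : 0 < E := lt_of_le_of_lt (by positivity) hcon
    have hCd : C * d < E := by nlinarith [mul_nonneg hC0.le hs0]
    have hCs : C * (ε * nz) < E := by nlinarith [mul_nonneg hC0.le hd0]
    -- key quadratic inequality
    have hεE : ε * q * r ≤ ε * nz * d + ε * nz * E + ε * (E * d) + ε * E ^ 2 := by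
      have h6 : ε * q ≤ ε * (nz + E) := mul_le_mul_of_nonneg_left h4 hε
      have h7 : 0 ≤ ε * (nz + E) := by positivity
      have h8 : ε * q * r ≤ ε * (nz + E) * (d + E) :=
        mul_le_mul h6 h5 hr0 h7
      nlinarith [h8]
    have hEd : 0 ≤ E * d := by positivity
    have t1 : ε * (E * d) ≤ M / 4 * (E * d) :=
      mul_le_mul_of_nonneg_right (by linarith) hEd
    have t2 : ε * E ^ 2 ≤ α / 4 * E ^ 2 :=
      mul_le_mul_of_nonneg_right hεα.le (sq_nonneg E)
    have key : 3 * α / 4 * E ^ 2 ≤ 5 * M / 4 * (E * d) + ε * nz * d + ε * nz * E := by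
      linarith [h1, h2, h3, hεE, t1, t2]
    -- contradiction
    have p5 : 3 * α / 4 * E ^ 2 * C ^ 2 ≤
        (5 * M / 4 * (E * d) + ε * nz * d + ε * nz * E) * C ^ 2 :=
      mul_le_mul_of_nonneg_right key (sq_nonneg C)
    have hCE0 : 0 < C * E := mul_pos hC0 hE0
    have p1 : 5 * M / 4 * ((C * E) * (C * d)) ≤ 5 * M / 4 * ((C * E) * E) :=
      mul_le_mul_of_nonneg_left (mul_le_mul_of_nonneg_left hCd.le hCE0.le) (by positivity)
    have p2 : (C * E) * (C * (ε * nz)) < (C * E) * E :=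
      mul_lt_mul_of_pos_left hCs hCE0
    have p3 : (C * d) * (C * (ε * nz)) ≤ E * E :=
      mul_le_mul hCd.le hCs.le (mul_nonneg hC0.le hs0) hE0.le
    have p4 : (5 * M / 4 + 2) * (C * E ^ 2) ≤ (3 * α / 4 * C) * (C * E ^ 2) :=
      mul_le_mul_of_nonneg_right hCα (by positivity)
    have p6 : E ^ 2 ≤ C * E ^ 2 := le_mul_of_one_le_left (sq_nonneg E) hC1
    linarith [p1, p2, p3, p4, p5, p6]
  -- pass to the infimum
  have hTne : ((fun φ : H => ‖z - φ‖) '' (S : Set H)).Nonempty :=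
    ⟨‖z - 0‖, 0, S.zero_mem, rfl⟩
  have hlb : ∀ b ∈ (fun φ : H => ‖z - φ‖) '' (S : Set H),
      ‖z - Pz‖ / C - ε * ‖z‖ ≤ b := by
    rintro b ⟨φ, hφ, rfl⟩
    have hm := main φ hφ
    rw [sub_le_iff_le_add, div_le_iff₀ hC0]
    nlinarith [hm]
  have hsInf : ‖z - Pz‖ / C - ε * ‖z‖ ≤
      sInf ((fun φ : H => ‖z - φ‖) '' (S : Set H)) := le_csInf hTne hlb
  rw [← div_le_iff₀' hC0]
  linarith
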